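/- Let 0 < ρ₁ < ρ₂, z₀ ∈ ℂ, let H(u,z) be analytic in z on the disk D = {z : |z - z₀| < ρ₂} for each u > 0, and let h_s(z) (s = 0,1,2,…) be analytic in D except possibly for an isolated singularity at z₀. If H(u,z) ~ Σ_{s≥0} h_s(z)/u^s as u → ∞, uniformly on the annulus ρ₁ < |z - z₀| < ρ₂, then each h_s has at worst a removable singularity at z₀, and the asymptotic expansion holds (uniformly on compacts) for all z ∈ D. -/

import Mathlib

open Metric Filter Topology

lemma aux_preconn (z₀ : ℂ) {ρ : ℝ} (hρ : 0 < ρ) :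
    IsPreconnected (ball z₀ ρ \ {z₀}) := by
  have hm : 0 < ρ / 2 := by positivity
  have key : ball z₀ ρ \ {z₀} =
      ⋃ t : {t : ℝ // 0 < t ∧ t < ρ},
        (sphere z₀ t.1 ∪ (fun x : ℝ => z₀ + (x : ℂ)) '' Set.Icc (min t.1 (ρ/2)) (max t.1 (ρ/2))) := by
    ext z
    constructor
    · rintro ⟨hz1, hz2⟩
      have hzne : z ≠ z₀ := by simpa using hz2
      have h0 : 0 < ‖z - z₀‖ := by
        simpa [norm_pos_iff, sub_ne_zero] using hzne
      have hlt : ‖z - z₀‖ < ρ := by simpa [mem_ball, dist_eq_norm] using hz1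
      exact Set.mem_iUnion.mpr ⟨⟨‖z - z₀‖, h0, hlt⟩, Or.inl (by simp [mem_sphere_iff_norm])⟩
    · intro hz
      obtain ⟨⟨t, ht0, htρ⟩, hzt⟩ := Set.mem_iUnion.mp hz
      rcases hzt with hs | ⟨x, hx, rfl⟩
      · have hn : ‖z - z₀‖ = t := by simpa [mem_sphere_iff_norm] using hs
        constructor
        · simpa [mem_ball, dist_eq_norm, hn] using htρ
        · simp only [Set.mem_singleton_iff]
          intro hzz
          rw [hzz] at hn; simp at hn; linarith
      · dsimp only at *
        have hx0 : 0 < x := lt_of_lt_of_le (lt_min ht0 hm) hx.1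
        have hxρ : x < ρ := lt_of_le_of_lt hx.2 (max_lt htρ (by linarith))
        have hn : ‖z₀ + (x:ℂ) - z₀‖ = x := by
          simp [Complex.norm_real, abs_of_pos hx0]
        constructor
        · simpa [mem_ball, dist_eq_norm, hn, abs_of_pos hx0] using hxρ
        · simp only [Set.mem_singleton_iff]
          intro hzz
          rw [hzz] at hn
          simp at hn
          linarith
  rw [key]
  apply isPreconnected_iUnion
  · refine ⟨z₀ + ((ρ/2 : ℝ) : ℂ), Set.mem_iInter.2 fun t => Or.inr ⟨ρ/2, ⟨min_le_right _ _, le_max_right _ _⟩, rfl⟩⟩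
  · rintro ⟨t, ht0, htρ⟩
    apply IsPreconnected.union (z₀ + (t : ℂ))
    · simp [mem_sphere_iff_norm, Complex.norm_real, abs_of_pos ht0]
    · exact ⟨t, ⟨min_le_left _ _, le_max_left _ _⟩, rfl⟩
    · exact isPreconnected_sphere (by rw [Complex.rank_real_complex]; norm_num) _ _
    · exact isPreconnected_Icc.image _ (Continuous.continuousOn (by continuity))

lemma aux_extend (ρ₁ ρ₂ : ℝ) (hρ₁ : 0 < ρ₁) (hρ : ρ₁ < ρ₂) (z₀ : ℂ)
    (H : ℝ → ℂ → ℂ) (h : ℕ → ℂ → ℂ)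
    (hH : ∀ u : ℝ, 0 < u → AnalyticOn ℂ (H u) (ball z₀ ρ₂))
    (hh : ∀ s : ℕ, AnalyticOn ℂ (h s) (ball z₀ ρ₂ \ {z₀}))
    (hexp : ∀ n : ℕ, ∃ C u₀ : ℝ, ∀ u : ℝ, u₀ ≤ u → ∀ z : ℂ,
      ρ₁ < ‖z - z₀‖ → ‖z - z₀‖ < ρ₂ →
      ‖H u z - ∑ s ∈ Finset.range n, h s z / (u : ℂ) ^ s‖ ≤ C / u ^ n) :
    ∀ s : ℕ, ∃ g : ℂ → ℂ, DifferentiableOn ℂ g (ball z₀ ρ₂) ∧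
      ∀ z : ℂ, ρ₁ < ‖z - z₀‖ → ‖z - z₀‖ < ρ₂ → g z = h s z := by
  intro s
  induction s using Nat.strong_induction_on with
  | _ s IH =>
  -- package the previously constructed extensions
  obtain ⟨gg, ggdiff, ggeq⟩ : ∃ gg : ℕ → ℂ → ℂ,
      (∀ t, t < s → DifferentiableOn ℂ (gg t) (ball z₀ ρ₂)) ∧
      (∀ t, t < s → ∀ z : ℂ, ρ₁ < ‖z - z₀‖ → ‖z - z₀‖ < ρ₂ → gg t z = h t z) := by
    choose g hg1 hg2 using IH
    refine ⟨fun t => if ht : t < s then g t ht else 0, fun t ht => ?_, fun t ht z h1 h2 => ?_⟩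
    · simpa [dif_pos ht] using hg1 t ht
    · simpa [dif_pos ht] using hg2 t ht z h1 h2
  set r : ℝ := (ρ₁ + ρ₂) / 2 with hrdef
  have hr₁ : ρ₁ < r := by rw [hrdef]; linarith
  have hr₂ : r < ρ₂ := by rw [hrdef]; linarith
  have hr0 : 0 < r := lt_trans hρ₁ hr₁
  obtain ⟨C, u₀, hC⟩ := hexp (s + 1)
  set Cb : ℝ := |C| with hCbdef
  have hCb0 : 0 ≤ Cb := abs_nonneg C
  set N₀ : ℕ := ⌈max u₀ 1⌉₊ with hN₀def
  have hN₀u : u₀ ≤ (N₀ : ℝ) := le_trans (le_max_left _ _) (Nat.le_ceil _)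
  have hN₀1 : (1 : ℝ) ≤ (N₀ : ℝ) := le_trans (le_max_right _ _) (Nat.le_ceil _)
  set E : ℝ → ℂ → ℂ :=
    fun u z => (u : ℂ) ^ s * (H u z - ∑ t ∈ Finset.range s, gg t z / (u : ℂ) ^ t) with hE
  have hEdiff : ∀ u : ℝ, 0 < u → DifferentiableOn ℂ (E u) (ball z₀ ρ₂) := by
    intro u hu
    have h1 : DifferentiableOn ℂ (H u) (ball z₀ ρ₂) :=
      ((isOpen_ball.analyticOn_iff_analyticOnNhd).mp (hH u hu)).differentiableOn
    have h2 : DifferentiableOn ℂ (fun z => ∑ t ∈ Finset.range s, gg t z / (u : ℂ) ^ t)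
        (ball z₀ ρ₂) :=
      DifferentiableOn.fun_sum fun t ht => (ggdiff t (Finset.mem_range.mp ht)).div_const _
    exact (h1.sub h2).const_mul _
  have hEh : ∀ u : ℝ, (N₀ : ℝ) ≤ u → ∀ z : ℂ, ρ₁ < ‖z - z₀‖ → ‖z - z₀‖ < ρ₂ →
      ‖E u z - h s z‖ ≤ Cb / u := by
    intro u hu z h1 h2
    have hu1 : (1 : ℝ) ≤ u := le_trans hN₀1 hu
    have hu0 : (0 : ℝ) < u := by linarith
    have huC : (u : ℂ) ≠ 0 := by exact_mod_cast hu0.ne'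
    have hCu := hC u (le_trans hN₀u hu) z
      (by assumption) (by assumption)
    have hsum : ∑ t ∈ Finset.range s, gg t z / (u : ℂ) ^ t
        = ∑ t ∈ Finset.range s, h t z / (u : ℂ) ^ t :=
      Finset.sum_congr rfl fun t ht => by rw [ggeq t (Finset.mem_range.mp ht) z h1 h2]
    have hkey : E u z - h s z
        = (u : ℂ) ^ s * (H u z - ∑ t ∈ Finset.range (s + 1), h t z / (u : ℂ) ^ t) := by
      rw [hE]
      simp only
      rw [hsum, Finset.sum_range_succ]
      have hps : (u : ℂ) ^ s ≠ 0 := pow_ne_zero _ huC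
      field_simp
      ring
    have hnu : ‖(u : ℂ)‖ = u := by
      rw [Complex.norm_real, Real.norm_eq_abs, abs_of_pos hu0]
    rw [hkey, norm_mul, norm_pow, hnu]
    calc u ^ s * ‖H u z - ∑ t ∈ Finset.range (s + 1), h t z / (u : ℂ) ^ t‖
        ≤ u ^ s * (C / u ^ (s + 1)) := by gcongr
      _ = C / u := by field_simp [hu0.ne']; ring
      _ ≤ Cb / u := by gcongr; exact le_abs_self C
  set F : ℕ → ℂ → ℂ := fun n => E ((n + N₀ : ℕ) : ℝ) with hF
  have hFu : ∀ n : ℕ, (N₀ : ℝ) ≤ ((n + N₀ : ℕ) : ℝ) := by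
    intro n; exact_mod_cast Nat.le_add_left N₀ n
  have hFpos : ∀ n : ℕ, (0 : ℝ) < ((n + N₀ : ℕ) : ℝ) := by
    intro n; exact lt_of_lt_of_le (by linarith) (hFu n)
  have hcau : ∀ n m : ℕ, ∀ z ∈ closedBall z₀ r,
      ‖F n z - F m z‖ ≤ Cb / ((n + N₀ : ℕ) : ℝ) + Cb / ((m + N₀ : ℕ) : ℝ) := by
    intro n m z hz
    have hdiff : DiffContOnCl ℂ (fun w => F n w - F m w) (ball z₀ r) := by
      apply DifferentiableOn.diffContOnCl
      rw [closure_ball z₀ hr0.ne']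
      exact (((hEdiff _ (hFpos n)).sub (hEdiff _ (hFpos m)))).mono
        (closedBall_subset_ball hr₂)
    refine Complex.norm_le_of_forall_mem_frontier_norm_le isBounded_ball hdiff ?_ ?_
    · intro w hw
      rw [frontier_ball z₀ hr0.ne'] at hw
      have hwr : ‖w - z₀‖ = r := by simpa [mem_sphere_iff_norm] using hw
      have hw1 : ρ₁ < ‖w - z₀‖ := by rw [hwr]; exact hr₁
      have hw2 : ‖w - z₀‖ < ρ₂ := by rw [hwr]; exact hr₂
      calc ‖F n w - F m w‖ ≤ ‖F n w - h s w‖ + ‖h s w - F m w‖ :=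
            norm_sub_le_norm_sub_add_norm_sub _ _ _
        _ ≤ Cb / ((n + N₀ : ℕ) : ℝ) + Cb / ((m + N₀ : ℕ) : ℝ) := by
            refine add_le_add (hEh _ (hFu n) w hw1 hw2) ?_
            rw [norm_sub_rev]
            exact hEh _ (hFu m) w hw1 hw2
    · rw [closure_ball z₀ hr0.ne']; exact hz
  have htend0 : Tendsto (fun n : ℕ => Cb / ((n + N₀ : ℕ) : ℝ)) atTop (𝓝 0) := by
    have h0 := (tendsto_const_div_atTop_nhds_zero_nat Cb).comp (tendsto_add_atTop_nat N₀)
    have heq : (fun n : ℕ => Cb / ((n + N₀ : ℕ) : ℝ))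
        = (fun n : ℕ => Cb / (n : ℝ)) ∘ (fun a : ℕ => a + N₀) := by
      funext n; simp [Function.comp]
    rw [heq]; exact h0
  set G₀ : ℂ → ℂ := fun z => limUnder atTop (fun n => F n z) with hG₀
  have hlim : ∀ z ∈ closedBall z₀ r, Tendsto (fun n => F n z) atTop (𝓝 (G₀ z)) := by
    intro z hz
    apply CauchySeq.tendsto_limUnder
    apply cauchySeq_of_le_tendsto_0
      (fun N => Cb / ((N + N₀ : ℕ) : ℝ) + Cb / ((N + N₀ : ℕ) : ℝ))
    · intro n m N hn hm
      rw [dist_eq_norm]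
      refine (hcau n m z hz).trans ?_
      have c1 : ((N + N₀ : ℕ) : ℝ) ≤ ((n + N₀ : ℕ) : ℝ) := by exact_mod_cast by omega
      have c2 : ((N + N₀ : ℕ) : ℝ) ≤ ((m + N₀ : ℕ) : ℝ) := by exact_mod_cast by omega
      gcongr
    · simpa using htend0.add htend0
  have hrate : ∀ n : ℕ, ∀ z ∈ closedBall z₀ r,
      ‖F n z - G₀ z‖ ≤ Cb / ((n + N₀ : ℕ) : ℝ) := by
    intro n z hz
    have t1 : Tendsto (fun m => ‖F n z - F m z‖) atTop (𝓝 ‖F n z - G₀ z‖) :=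
      (tendsto_const_nhds.sub (hlim z hz)).norm
    have t2 : Tendsto (fun m : ℕ => Cb / ((n + N₀ : ℕ) : ℝ) + Cb / ((m + N₀ : ℕ) : ℝ)) atTop
        (𝓝 (Cb / ((n + N₀ : ℕ) : ℝ) + 0)) := tendsto_const_nhds.add htend0
    have := le_of_tendsto_of_tendsto' t1 t2 (fun m => hcau n m z hz)
    simpa using this
  have hunif : TendstoUniformlyOn F G₀ atTop (closedBall z₀ r) := by
    rw [Metric.tendstoUniformlyOn_iff]
    intro ε hε
    filter_upwards [htend0.eventually (gt_mem_nhds hε)] with n hn z hz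
    rw [dist_comm, dist_eq_norm]
    exact lt_of_le_of_lt (hrate n z hz) hn
  have hG₀diff : DifferentiableOn ℂ G₀ (ball z₀ r) :=
    ((hunif.mono ball_subset_closedBall).tendstoLocallyUniformlyOn).differentiableOn
      (Eventually.of_forall fun n => (hEdiff _ (hFpos n)).mono (ball_subset_ball hr₂.le))
      isOpen_ball
  have hG₀eq : ∀ z : ℂ, ρ₁ < ‖z - z₀‖ → ‖z - z₀‖ < r → G₀ z = h s z := by
    intro z h1 h2
    have hz : z ∈ closedBall z₀ r := by
      rw [mem_closedBall, dist_eq_norm]; exact h2.le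
    have t3 : Tendsto (fun n => F n z) atTop (𝓝 (h s z)) := by
      have hz2 : ‖z - z₀‖ < ρ₂ := h2.trans hr₂
      have hsq : Tendsto (fun n => F n z - h s z) atTop (𝓝 0) :=
        squeeze_zero_norm (fun n => hEh _ (hFu n) z h1 hz2) htend0
      simpa using hsq.add (tendsto_const_nhds : Tendsto (fun _ : ℕ => h s z) atTop (𝓝 (h s z)))
    exact tendsto_nhds_unique (hlim z hz) t3
  refine ⟨fun z => if ‖z - z₀‖ < r then G₀ z else h s z, ?_, ?_⟩
  · intro z hz
    apply DifferentiableAt.differentiableWithinAt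
    by_cases hzr : ‖z - z₀‖ < r
    · have hopen : IsOpen {w : ℂ | ‖w - z₀‖ < r} :=
        isOpen_lt ((continuous_id.sub continuous_const).norm) continuous_const
      have hd : DifferentiableAt ℂ G₀ z := hG₀diff.differentiableAt
        (isOpen_ball.mem_nhds (by rw [mem_ball, dist_eq_norm]; exact hzr))
      exact hd.congr_of_eventuallyEq
        (eventually_of_mem (hopen.mem_nhds hzr) (fun w hw => if_pos hw))
    · push_neg at hzr
      have h1 : ρ₁ < ‖z - z₀‖ := lt_of_lt_of_le hr₁ hzr
      have hU : IsOpen (ball z₀ ρ₂ \ {z₀}) := isOpen_ball.sdiff isClosed_singleton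
      have hzU : z ∈ ball z₀ ρ₂ \ {z₀} := by
        refine ⟨hz, ?_⟩
        simp only [Set.mem_singleton_iff]
        intro hzz
        rw [hzz] at h1; simp at h1; linarith
      have hhd : DifferentiableAt ℂ (h s) z :=
        ((hU.analyticOn_iff_analyticOnNhd.mp (hh s)) z hzU).differentiableAt
      apply hhd.congr_of_eventuallyEq
      have hopen : IsOpen {w : ℂ | ρ₁ < ‖w - z₀‖} :=
        isOpen_lt continuous_const ((continuous_id.sub continuous_const).norm)
      refine eventually_of_mem (hopen.mem_nhds h1) (fun w hw => ?_)
      by_cases hwr : ‖w - z₀‖ < r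
      · simp only [if_pos hwr]; exact hG₀eq w hw hwr
      · simp only [if_neg hwr]
  · intro z h1 h2
    by_cases hzr : ‖z - z₀‖ < r
    · simp only [if_pos hzr]; exact hG₀eq z h1 hzr
    · simp only [if_neg hzr]

/-- If `H(u,·)` is analytic on a disk, the `h_s` are analytic on the punctured disk,
and `H(u,z) ~ Σ h_s(z)/u^s` uniformly on an annulus, then each `h_s` extends
analytically to the whole disk and the expansion holds uniformly on compacts. -/
theorem stmt11 (ρ₁ ρ₂ : ℝ) (hρ₁ : 0 < ρ₁) (hρ : ρ₁ < ρ₂) (z₀ : ℂ)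
    (H : ℝ → ℂ → ℂ) (h : ℕ → ℂ → ℂ)
    (hH : ∀ u : ℝ, 0 < u → AnalyticOn ℂ (H u) (ball z₀ ρ₂))
    (hh : ∀ s : ℕ, AnalyticOn ℂ (h s) (ball z₀ ρ₂ \ {z₀}))
    (hexp : ∀ n : ℕ, ∃ C u₀ : ℝ, ∀ u : ℝ, u₀ ≤ u → ∀ z : ℂ,
      ρ₁ < ‖z - z₀‖ → ‖z - z₀‖ < ρ₂ →
      ‖H u z - ∑ s ∈ Finset.range n, h s z / (u : ℂ) ^ s‖ ≤ C / u ^ n) :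
    ∃ g : ℕ → ℂ → ℂ,
      (∀ s : ℕ, AnalyticOn ℂ (g s) (ball z₀ ρ₂)) ∧
      (∀ s : ℕ, ∀ z ∈ ball z₀ ρ₂ \ {z₀}, g s z = h s z) ∧
      (∀ K : Set ℂ, IsCompact K → K ⊆ ball z₀ ρ₂ →
        ∀ n : ℕ, ∃ C u₀ : ℝ, ∀ u : ℝ, u₀ ≤ u → ∀ z ∈ K,
          ‖H u z - ∑ s ∈ Finset.range n, g s z / (u : ℂ) ^ s‖ ≤ C / u ^ n) := by
  have key := aux_extend ρ₁ ρ₂ hρ₁ hρ z₀ H h hH hh hexp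
  choose g hgdiff hgeq using key
  refine ⟨g, ?_, ?_, ?_⟩
  · exact fun s => ((hgdiff s).analyticOnNhd isOpen_ball).analyticOn
  · intro s z hz
    have hU : IsOpen (ball z₀ ρ₂ \ {z₀}) := isOpen_ball.sdiff isClosed_singleton
    have hpre : IsPreconnected (ball z₀ ρ₂ \ {z₀}) := aux_preconn z₀ (lt_trans hρ₁ hρ)
    have hga : AnalyticOnNhd ℂ (g s) (ball z₀ ρ₂ \ {z₀}) :=
      ((hgdiff s).analyticOnNhd isOpen_ball).mono Set.diff_subset
    have hha : AnalyticOnNhd ℂ (h s) (ball z₀ ρ₂ \ {z₀}) :=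
      hU.analyticOn_iff_analyticOnNhd.mp (hh s)
    set z₁ : ℂ := z₀ + (((ρ₁ + ρ₂) / 2 : ℝ) : ℂ) with hz₁
    have hz₁n : ‖z₁ - z₀‖ = (ρ₁ + ρ₂) / 2 := by
      have hd : z₁ - z₀ = (((ρ₁ + ρ₂) / 2 : ℝ) : ℂ) := by rw [hz₁]; ring
      rw [hd, Complex.norm_real, Real.norm_eq_abs,
        abs_of_pos (by linarith : (0:ℝ) < (ρ₁ + ρ₂) / 2)]
    have hz₁U : z₁ ∈ ball z₀ ρ₂ \ {z₀} := by
      constructor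
      · rw [mem_ball, dist_eq_norm, hz₁n]; linarith
      · simp only [Set.mem_singleton_iff]
        intro hc
        rw [hc] at hz₁n; simp at hz₁n; linarith
    have hopen : IsOpen ({w : ℂ | ρ₁ < ‖w - z₀‖} ∩ {w : ℂ | ‖w - z₀‖ < ρ₂}) :=
      (isOpen_lt continuous_const ((continuous_id.sub continuous_const).norm)).inter
        (isOpen_lt ((continuous_id.sub continuous_const).norm) continuous_const)
    have hfg : g s =ᶠ[nhds z₁] h s := by
      refine eventually_of_mem (hopen.mem_nhds ⟨?_, ?_⟩) fun w hw => hgeq s w hw.1 hw.2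
      · simp only [Set.mem_setOf_eq]; rw [hz₁n]; linarith
      · simp only [Set.mem_setOf_eq]; rw [hz₁n]; linarith
    exact AnalyticOnNhd.eqOn_of_preconnected_of_eventuallyEq hga hha hpre hz₁U hfg hz
  · intro K hK hKsub n
    rcases K.eq_empty_or_nonempty with rfl | hne
    · exact ⟨0, 0, fun u hu z hz => absurd hz (Set.notMem_empty z)⟩
    obtain ⟨x, hxK, hxmax⟩ := hK.exists_isMaxOn hne
      ((continuous_id.sub continuous_const).norm.continuousOn :
        ContinuousOn (fun w : ℂ => ‖w - z₀‖) K)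
    set M : ℝ := ‖x - z₀‖ with hM
    have hM2 : M < ρ₂ := by
      have := hKsub hxK; rwa [mem_ball, dist_eq_norm] at this
    have hmax2 : max M ρ₁ < ρ₂ := max_lt hM2 hρ
    set r : ℝ := (max M ρ₁ + ρ₂) / 2 with hrdef
    have hr₁ : ρ₁ < r := by
      rw [hrdef]; have := le_max_right M ρ₁; linarith
    have hrM : M < r := by
      rw [hrdef]; have := le_max_left M ρ₁; linarith
    have hr₂ : r < ρ₂ := by rw [hrdef]; linarith
    have hr0 : 0 < r := lt_trans hρ₁ hr₁
    obtain ⟨C, u₀, hC⟩ := hexp n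
    refine ⟨C, max u₀ 1, fun u hu z hz => ?_⟩
    have hu₀ : u₀ ≤ u := le_trans (le_max_left _ _) hu
    have hu1 : (1 : ℝ) ≤ u := le_trans (le_max_right _ _) hu
    have hu0 : (0 : ℝ) < u := by linarith
    have hdiff : DiffContOnCl ℂ
        (fun w => H u w - ∑ s ∈ Finset.range n, g s w / (u : ℂ) ^ s) (ball z₀ r) := by
      apply DifferentiableOn.diffContOnCl
      rw [closure_ball z₀ hr0.ne']
      have h1 : DifferentiableOn ℂ (H u) (ball z₀ ρ₂) :=
        ((isOpen_ball.analyticOn_iff_analyticOnNhd).mp (hH u hu0)).differentiableOn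
      have h2 : DifferentiableOn ℂ (fun w => ∑ s ∈ Finset.range n, g s w / (u : ℂ) ^ s)
          (ball z₀ ρ₂) :=
        DifferentiableOn.fun_sum fun t _ => (hgdiff t).div_const _
      exact (h1.sub h2).mono (closedBall_subset_ball hr₂)
    refine Complex.norm_le_of_forall_mem_frontier_norm_le isBounded_ball hdiff ?_ ?_
    · intro w hw
      rw [frontier_ball z₀ hr0.ne'] at hw
      have hwr : ‖w - z₀‖ = r := by simpa [mem_sphere_iff_norm] using hw
      have hw1 : ρ₁ < ‖w - z₀‖ := by rw [hwr]; exact hr₁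
      have hw2 : ‖w - z₀‖ < ρ₂ := by rw [hwr]; exact hr₂
      have hsum : ∑ s ∈ Finset.range n, g s w / (u : ℂ) ^ s
          = ∑ s ∈ Finset.range n, h s w / (u : ℂ) ^ s :=
        Finset.sum_congr rfl fun t _ => by rw [hgeq t w hw1 hw2]
      rw [hsum]
      exact hC u hu₀ w (by assumption) (by assumption)
    · rw [closure_ball z₀ hr0.ne', mem_closedBall, dist_eq_norm]
      exact le_trans (hxmax hz) (le_of_lt hrM)
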